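/- arXiv:2310.13886 — 3 statements merged into one kernel-verified Lean document; each statement's English description precedes it below -/
import Mathlib

section
/- Let φ: ℝⁿ → ℝ be α-strongly convex with convex conjugate φ* differentiable at x. Then for all w ∈ ℝⁿ: φ(w) ≥ -φ*(x) + ⟨w, x⟩ + (α/2)‖w - ∇φ*(x)‖². -/
noncomputable section

open Set

/-- The convex conjugate `φ*(y) = sup_x (⟪x,y⟫ - φ(x))`. -/
def conj {n : ℕ} (φ : EuclideanSpace ℝ (Fin n) → ℝ) (y : EuclideanSpace ℝ (Fin n)) : ℝ :=
  ⨆ x : EuclideanSpace ℝ (Fin n), ((inner ℝ x y : ℝ) - φ x)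

/-- If `φ` is `α`-strongly convex and `φ*` is differentiable at `x` with gradient `g`,
then `φ(w) ≥ -φ*(x) + ⟪w, x⟫ + (α/2)‖w - ∇φ*(x)‖²` for all `w`. -/
theorem stmt1 {n : ℕ} (φ : EuclideanSpace ℝ (Fin n) → ℝ) (α : ℝ) (hα : 0 < α)
    (hsc : ∀ x y : EuclideanSpace ℝ (Fin n), ∀ t : ℝ, t ∈ Icc (0 : ℝ) 1 →
      φ (t • x + (1 - t) • y) ≤
        t * φ x + (1 - t) * φ y - (α / 2) * t * (1 - t) * ‖x - y‖ ^ 2)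
    (x g : EuclideanSpace ℝ (Fin n)) (hg : HasGradientAt (conj φ) g x) :
    ∀ w : EuclideanSpace ℝ (Fin n),
      φ w ≥ -conj φ x + (inner ℝ w x : ℝ) + (α / 2) * ‖w - g‖ ^ 2 := by
  have hcvx : ConvexOn ℝ (univ : Set (EuclideanSpace ℝ (Fin n))) φ := by
    refine ⟨convex_univ, fun a _ b _ ta tb h0a h0b hab => ?_⟩
    have h := hsc a b ta ⟨h0a, by linarith⟩
    have h1 : (1 - ta) = tb := by linarith
    rw [h1] at h
    simp only [smul_eq_mul]
    nlinarith [sq_nonneg ‖a - b‖, mul_nonneg (mul_nonneg (by linarith : (0:ℝ) ≤ α/2) h0a) h0b,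
      sq_nonneg (‖a-b‖)]
  have hcont : Continuous φ := by
    have := hcvx.continuousOn isOpen_univ
    rwa [continuousOn_univ] at this
  obtain ⟨M, hM⟩ : ∃ M : ℝ, ∀ z ∈ Metric.closedBall (0 : EuclideanSpace ℝ (Fin n)) 1, ‖φ z‖ ≤ M :=
    (isCompact_closedBall _ _).exists_bound_of_continuousOn hcont.continuousOn
  have hM0 : 0 ≤ M := le_trans (norm_nonneg _) (hM 0 (by simp))
  have hφ0 : |φ 0| ≤ M := hM 0 (by simp)
  have hgrow : ∀ z : EuclideanSpace ℝ (Fin n), 1 ≤ ‖z‖ →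
      α/2 * ‖z‖^2 - (α/2 + 2*M) * ‖z‖ ≤ φ z := by
    intro z hz
    have hr : (0:ℝ) < ‖z‖ := lt_of_lt_of_le one_pos hz
    have h := hsc z 0 ‖z‖⁻¹ ⟨inv_nonneg.mpr hr.le, inv_le_one_of_one_le₀ hz⟩
    rw [smul_zero, add_zero, sub_zero] at h
    have hu : ‖(‖z‖⁻¹ • z)‖ = 1 := by
      rw [norm_smul, Real.norm_eq_abs, abs_of_pos (inv_pos.mpr hr)]
      exact inv_mul_cancel₀ hr.ne'
    have hum : ‖φ (‖z‖⁻¹ • z)‖ ≤ M := hM _ (by simp [Metric.mem_closedBall, dist_zero_right, hu])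
    have hua := abs_le.mp (by rwa [Real.norm_eq_abs] at hum)
    have h0a := abs_le.mp hφ0
    have hinv : ‖z‖⁻¹ * ‖z‖ = 1 := inv_mul_cancel₀ hr.ne'
    have h2 := mul_le_mul_of_nonneg_left h hr.le
    have e : ‖z‖ * (‖z‖⁻¹ * φ z + (1 - ‖z‖⁻¹) * φ 0 - α / 2 * ‖z‖⁻¹ * (1 - ‖z‖⁻¹) * ‖z‖ ^ 2)
        = φ z + (‖z‖ - 1) * φ 0 - α/2 * (‖z‖^2 - ‖z‖) := by
      field_simp
    rw [e] at h2
    nlinarith [h2, hua.1, h0a.1, h0a.2, hM0, hz, hr.le,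
      mul_le_mul_of_nonneg_left hua.1 hr.le]
  have hbdd : ∀ y : EuclideanSpace ℝ (Fin n),
      BddAbove (range fun z : EuclideanSpace ℝ (Fin n) => (inner ℝ z y : ℝ) - φ z) := by
    intro y
    refine ⟨M + ‖y‖ + (α/2 + 2*M + ‖y‖)^2 / (2*α), ?_⟩
    rintro _ ⟨z, rfl⟩
    have hiz : (inner ℝ z y : ℝ) ≤ ‖z‖ * ‖y‖ := real_inner_le_norm z y
    have hq : (α/2 + 2*M + ‖y‖)^2 / (2*α) * (2*α) = (α/2 + 2*M + ‖y‖)^2 :=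
      div_mul_cancel₀ _ (by positivity)
    have hy0 : (0:ℝ) ≤ ‖y‖ := norm_nonneg _
    by_cases hz1 : ‖z‖ ≤ 1
    · have hb' : ‖φ z‖ ≤ M := hM z (by simpa [Metric.mem_closedBall, dist_zero_right] using hz1)
      have hb := abs_le.mp (by rwa [Real.norm_eq_abs] at hb')
      have hz0 : (0:ℝ) ≤ ‖z‖ := norm_nonneg _
      nlinarith [hb.1, mul_le_mul_of_nonneg_right hz1 hy0, hq,
        sq_nonneg (α/2 + 2*M + ‖y‖), hα, hiz]
    · push_neg at hz1
      have hg2 := hgrow z hz1.le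
      nlinarith [sq_nonneg (α*‖z‖ - (α/2 + 2*M + ‖y‖)), hq, hα, hM0, hiz, hg2]
  have hle : ∀ (z y : EuclideanSpace ℝ (Fin n)), (inner ℝ z y : ℝ) - φ z ≤ conj φ y := by
    intro z y
    exact le_ciSup (hbdd y) z
  have hkey : ∀ t ∈ Ioo (0:ℝ) 1, ∀ z z' : EuclideanSpace ℝ (Fin n),
      t * ((inner ℝ z x : ℝ) - φ z) + (1-t) * ((inner ℝ z' x : ℝ) - φ z')
        + α/2 * t * (1-t) * ‖z - z'‖^2 ≤ conj φ x := by
    intro t ht z z'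
    have h1 := hsc z z' t ⟨ht.1.le, ht.2.le⟩
    have h2 := hle (t • z + (1-t) • z') x
    have h3 : (inner ℝ (t • z + (1-t) • z') x : ℝ)
        = t * (inner ℝ z x : ℝ) + (1-t) * (inner ℝ z' x : ℝ) := by
      rw [inner_add_left, real_inner_smul_left, real_inner_smul_left]
    rw [h3] at h2
    linarith
  have hδs : ∀ δ : ℝ, 0 < δ → ∃ s₀ : ℝ, 0 < s₀ ∧
      ∀ h : EuclideanSpace ℝ (Fin n), ‖h‖ ≤ s₀ →
      conj φ (x + h) - conj φ x - (inner ℝ g h : ℝ) ≤ δ * ‖h‖ := by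
    intro δ hδp
    have hlo := hasGradientAt_iff_isLittleO.mp hg
    have h1 := hlo.def hδp
    rw [Metric.eventually_nhds_iff] at h1
    obtain ⟨s, hs, H⟩ := h1
    refine ⟨s/2, by positivity, fun h hh => ?_⟩
    have hd : dist (x + h) x < s := by
      rw [dist_eq_norm, add_sub_cancel_left]
      linarith
    have h2 := H hd
    simp only [add_sub_cancel_left] at h2
    rw [Real.norm_eq_abs] at h2
    exact le_trans (le_abs_self _) h2
  intro w
  have hD0 : (0:ℝ) ≤ ‖w - g‖ := norm_nonneg _
  set D := ‖w - g‖ with hDdef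
  have hmain : (inner ℝ w x : ℝ) - φ w + α/2 * D^2 ≤ conj φ x := by
    have hA : ∀ δ ∈ Ioo (0:ℝ) 1,
        (inner ℝ w x : ℝ) - φ w + α/2 * (1-δ) * (max (D - 2*δ) 0)^2 ≤ conj φ x + δ := by
      intro δ hδ01
      obtain ⟨s₀, hs₀, Hs⟩ := hδs δ hδ01.1
      set ε := min (δ*s₀) (δ*δ) with hεdef
      have hεpos : 0 < ε := lt_min (mul_pos hδ01.1 hs₀) (mul_pos hδ01.1 hδ01.1)
      obtain ⟨z', hz'⟩ : ∃ z', conj φ x - ε < (inner ℝ z' x : ℝ) - φ z' := by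
        have h0 : conj φ x - ε < conj φ x := by linarith
        conv at h0 => rw [conj]
        exact exists_lt_of_lt_ciSup h0
      have hεs : ε ≤ δ * s₀ := min_le_left _ _
      have hεδ : ε ≤ δ * δ := min_le_right _ _
      have hzg : ‖z' - g‖ ≤ 2*δ := by
        by_cases hv : z' - g = 0
        · rw [hv, norm_zero]; linarith [hδ01.1]
        · have hvn : 0 < ‖z' - g‖ := norm_pos_iff.mpr hv
          set h := (s₀ / ‖z' - g‖) • (z' - g) with hhdef
          have hhn : ‖h‖ = s₀ := by
            rw [hhdef, norm_smul, Real.norm_eq_abs, abs_of_pos (by positivity)]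
            field_simp
          have hub := Hs h (le_of_eq hhn)
          rw [hhn] at hub
          have hlb := hle z' (x + h)
          have hinn : (inner ℝ z' (x + h) : ℝ) = (inner ℝ z' x : ℝ) + (inner ℝ z' h : ℝ) :=
            inner_add_right z' x h
          have hvh : (inner ℝ (z' - g) h : ℝ) = s₀ * ‖z' - g‖ := by
            rw [hhdef, real_inner_smul_right, real_inner_self_eq_norm_sq]
            field_simp
          have hgh : (inner ℝ z' h : ℝ) - (inner ℝ g h : ℝ) = (inner ℝ (z' - g) h : ℝ) :=
            (inner_sub_left z' g h).symm
          have hcomb : s₀ * ‖z' - g‖ ≤ s₀ * (2*δ) := by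
            rw [hvh] at hgh
            linarith [hub, hlb, hz', hεs, hinn, hgh]
          exact le_of_mul_le_mul_left hcomb hs₀
      have hk := hkey δ hδ01 w z'
      have htri : D - 2*δ ≤ ‖w - z'‖ := by
        have h1 := dist_triangle w z' g
        rw [dist_eq_norm, dist_eq_norm, dist_eq_norm] at h1
        rw [hDdef]
        linarith [hzg]
      have hmax2 : (max (D - 2*δ) 0)^2 ≤ ‖w - z'‖^2 :=
        pow_le_pow_left₀ (le_max_right _ _) (max_le htri (norm_nonneg _)) 2
      have h5 : δ * ((inner ℝ w x : ℝ) - φ w + α/2 * (1-δ) * ‖w - z'‖^2)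
          ≤ δ * (conj φ x + δ) := by
        linarith [hk, mul_le_mul_of_nonneg_left hz'.le (by linarith [hδ01.2] : (0:ℝ) ≤ 1-δ),
          hεδ, mul_nonneg hδ01.1.le hεpos.le]
      have h6 := le_of_mul_le_mul_left h5 hδ01.1
      have hc : (0:ℝ) ≤ α/2 * (1-δ) := mul_nonneg (by linarith) (by linarith [hδ01.2])
      linarith [mul_le_mul_of_nonneg_left hmax2 hc, h6]
    have hcontF : Continuous (fun δ : ℝ =>
        (inner ℝ w x : ℝ) - φ w + α/2 * (1-δ) * (max (D - 2*δ) 0)^2) := by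
      apply continuous_const.add
      apply (continuous_const.mul (continuous_const.sub continuous_id)).mul
      exact ((continuous_const.sub (continuous_const.mul continuous_id)).max continuous_const).pow 2
    have hF0 : (inner ℝ w x : ℝ) - φ w + α/2 * (1-(0:ℝ)) * (max (D - 2*(0:ℝ)) 0)^2
        = (inner ℝ w x : ℝ) - φ w + α/2 * D^2 := by
      norm_num [max_eq_left hD0]
    have hTl : Filter.Tendsto (fun δ : ℝ =>
        (inner ℝ w x : ℝ) - φ w + α/2 * (1-δ) * (max (D - 2*δ) 0)^2)
        (nhdsWithin 0 (Ioi 0)) (nhds ((inner ℝ w x : ℝ) - φ w + α/2 * D^2)) := by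
      rw [← hF0]
      exact (hcontF.tendsto 0).mono_left nhdsWithin_le_nhds
    have hTr : Filter.Tendsto (fun δ : ℝ => conj φ x + δ)
        (nhdsWithin 0 (Ioi 0)) (nhds (conj φ x)) := by
      have h1 : Filter.Tendsto (fun δ : ℝ => conj φ x + δ) (nhds 0) (nhds (conj φ x + 0)) :=
        (continuous_const.add continuous_id).tendsto 0
      rw [add_zero] at h1
      exact h1.mono_left nhdsWithin_le_nhds
    refine le_of_tendsto_of_tendsto hTl hTr ?_
    filter_upwards [Ioo_mem_nhdsGT_of_mem (⟨le_refl 0, one_pos⟩ : (0:ℝ) ∈ Ico 0 1)] with δ hδ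
    exact hA δ hδ
  linarith [hmain]
end
end

section
/- Suppose X, X̄ are random variables in ℝⁿ, Y in ℝᵐ, with X̄ independent of Y, X̄ ~ Law(X), and T: ℝⁿ × ℝᵐ → ℝⁿ measurable. If (T(X̄, Y), Y) has the same joint law as (X, Y), then for almost every y (w.r.t. the law of Y), the pushforward of Law(X) under T(·, y) equals the conditional law of X given Y = y. -/
noncomputable section

open MeasureTheory ProbabilityTheory

/-- If `X̄ ⟂ Y`, `X̄ ~ Law(X)`, and `(T(X̄,Y), Y)` has the same law as `(X, Y)`, then for
almost every `y`, the pushforward of `Law(X)` under `T(·,y)` is the conditional law of `X`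
given `Y = y`. -/
theorem stmt8 {n m : ℕ} {Ω : Type*} [MeasurableSpace Ω] (μ : Measure Ω)
    [IsProbabilityMeasure μ]
    (X Xbar : Ω → (Fin n → ℝ)) (Y : Ω → (Fin m → ℝ))
    (hX : Measurable X) (hXbar : Measurable Xbar) (hY : Measurable Y)
    (T : (Fin n → ℝ) × (Fin m → ℝ) → (Fin n → ℝ)) (hT : Measurable T)
    (hindep : IndepFun Xbar Y μ)
    (hcopy : μ.map Xbar = μ.map X)
    (hjoint : μ.map (fun ω => (T (Xbar ω, Y ω), Y ω)) = μ.map fun ω => (X ω, Y ω)) :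
    ∀ᵐ y ∂(μ.map Y),
      (μ.map X).map (fun x => T (x, y)) = condDistrib X Y μ y := by
  set ν : Measure (Fin n → ℝ) := μ.map X with hν
  have hνprob : IsProbabilityMeasure ν := Measure.isProbabilityMeasure_map hX.aemeasurable
  have hg : Measurable fun p : (Fin m → ℝ) × (Fin n → ℝ) => T (p.2, p.1) :=
    hT.comp (measurable_snd.prodMk measurable_fst)
  set κ : Kernel (Fin m → ℝ) (Fin n → ℝ) :=
    Kernel.map ((Kernel.deterministic id measurable_id) ×ₖ Kernel.const _ ν)
      (fun p => T (p.2, p.1)) with hκdef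
  haveI : IsMarkovKernel κ := Kernel.IsMarkovKernel.map _ hg
  have hκ : ∀ y, κ y = ν.map (fun x => T (x, y)) := by
    intro y
    rw [hκdef, Kernel.map_apply _ hg, Kernel.prod_apply, Kernel.deterministic_apply,
      Kernel.const_apply, id_def, Measure.dirac_prod, Measure.map_map hg measurable_prodMk_left]
    rfl
  -- joint law identity
  have hindep' : μ.map (fun ω => (Y ω, Xbar ω)) = (μ.map Y).prod (μ.map Xbar) :=
    (indepFun_iff_map_prod_eq_prod_map_map hY.aemeasurable hXbar.aemeasurable).mp hindep.symm
  have hcomp : μ.map (fun ω => (Y ω, X ω)) = (μ.map Y) ⊗ₘ κ := by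
    have hswap : μ.map (fun ω => (Y ω, X ω))
        = μ.map (fun ω => (Y ω, T (Xbar ω, Y ω))) := by
      have h1 : μ.map (fun ω => (Y ω, X ω))
          = (μ.map (fun ω => (X ω, Y ω))).map Prod.swap := by
        rw [Measure.map_map measurable_swap (hX.prodMk hY)]; rfl
      have hTY : Measurable fun ω : Ω => (T (Xbar ω, Y ω), Y ω) :=
        (hT.comp (hXbar.prodMk hY)).prodMk hY
      have h2 : μ.map (fun ω => (Y ω, T (Xbar ω, Y ω)))
          = (μ.map (fun ω => (T (Xbar ω, Y ω), Y ω))).map Prod.swap := by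
        rw [Measure.map_map measurable_swap hTY]; rfl
      rw [h1, h2, hjoint]
    rw [hswap]
    have hTbar : Measurable fun ω => (Y ω, T (Xbar ω, Y ω)) :=
      hY.prodMk (hT.comp (hXbar.prodMk hY))
    ext s hs
    rw [Measure.compProd_apply hs]
    have hmap : μ.map (fun ω => (Y ω, T (Xbar ω, Y ω)))
        = (μ.map (fun ω => (Y ω, Xbar ω))).map (fun p => (p.1, T (p.2, p.1))) := by
      rw [Measure.map_map (measurable_fst.prodMk hg) (hY.prodMk hXbar)]; rfl
    rw [hmap, hindep', hcopy,
      Measure.map_apply (measurable_fst.prodMk hg) hs,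
      Measure.prod_apply ((measurable_fst.prodMk hg) hs)]
    refine lintegral_congr fun y => ?_
    have hTy : Measurable fun x : Fin n → ℝ => T (x, y) :=
      hT.comp (measurable_id.prodMk measurable_const)
    rw [hκ y, Measure.map_apply hTy (measurable_prodMk_left hs)]
    rfl
  have := condDistrib_ae_eq_of_measure_eq_compProd_of_measurable hY hX hcomp
  filter_upwards [this] with y hy
  rw [hy, hκ y]
end
end

section
/- Conversely, if T: ℝⁿ × ℝᵐ → ℝⁿ is measurable and for almost every y the pushforward of Law(X) under T(·,y) equals the conditional law of X given Y = y, then with X̄ an independent copy of X (independent of Y), the pair (T(X̄, Y), Y) has the same joint law as (X, Y). -/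
noncomputable section

open MeasureTheory ProbabilityTheory

/-- Conversely: if for almost every `y` the pushforward of `Law(X)` under `T(·,y)` equals the
conditional law of `X` given `Y = y`, then with `X̄` an independent copy of `X` (independent
of `Y`), the pair `(T(X̄,Y), Y)` has the same joint law as `(X, Y)`. -/
theorem stmt9 {n m : ℕ} {Ω : Type*} [MeasurableSpace Ω] (μ : Measure Ω)
    [IsProbabilityMeasure μ]
    (X Xbar : Ω → (Fin n → ℝ)) (Y : Ω → (Fin m → ℝ))
    (hX : Measurable X) (hXbar : Measurable Xbar) (hY : Measurable Y)
    (T : (Fin n → ℝ) × (Fin m → ℝ) → (Fin n → ℝ)) (hT : Measurable T)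
    (hindep : IndepFun Xbar Y μ)
    (hcopy : μ.map Xbar = μ.map X)
    (hae : ∀ᵐ y ∂(μ.map Y),
      (μ.map X).map (fun x => T (x, y)) = condDistrib X Y μ y) :
    μ.map (fun ω => (T (Xbar ω, Y ω), Y ω)) = μ.map fun ω => (X ω, Y ω) := by
  have hXprob : IsProbabilityMeasure (μ.map X) := Measure.isProbabilityMeasure_map hX.aemeasurable
  have hYprob : IsProbabilityMeasure (μ.map Y) := Measure.isProbabilityMeasure_map hY.aemeasurable
  -- the kernel y ↦ (Law X) pushed forward by T(·, y)
  set κ : Kernel (Fin m → ℝ) (Fin n → ℝ) :=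
    ⟨fun y => (μ.map X).map (fun x => T (x, y)), by
      refine Measure.measurable_of_measurable_coe _ (fun s hs => ?_)
      have : ∀ y, ((μ.map X).map (fun x => T (x, y))) s
          = (μ.map X) ((fun x => (x, y)) ⁻¹' (T ⁻¹' s)) := by
        intro y
        rw [Measure.map_apply (by fun_prop) hs]
        rfl
      simp_rw [this]
      exact measurable_measure_prodMk_right (hT hs)⟩ with hκdef
  have hκ_apply : ∀ y, κ y = (μ.map X).map (fun x => T (x, y)) := fun y => rfl
  have : IsMarkovKernel κ := by
    constructor
    intro y
    rw [hκ_apply]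
    exact Measure.isProbabilityMeasure_map (by fun_prop)
  -- disintegration: Law(Y, X) = Law(Y) ⊗ₘ condDistrib X Y μ
  have hdis : μ.map (fun ω => (Y ω, X ω)) = (μ.map Y) ⊗ₘ condDistrib X Y μ := by
    rw [condDistrib]
    conv_lhs => rw [← (μ.map fun ω => (Y ω, X ω)).disintegrate (μ.map fun ω => (Y ω, X ω)).condKernel]
    rw [Measure.fst_map_prodMk hX]
  -- κ agrees a.e. with condDistrib, so the compProds agree
  have hcomp : (μ.map Y) ⊗ₘ κ = (μ.map Y) ⊗ₘ condDistrib X Y μ := by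
    refine Measure.compProd_congr ?_
    filter_upwards [hae] with y hy
    rw [hκ_apply, hy]
  -- Law(Y, X̄) = Law(Y) × Law(X)
  have hprod : μ.map (fun ω => (Y ω, Xbar ω)) = (μ.map Y).prod (μ.map X) := by
    rw [← hcopy]
    exact (indepFun_iff_map_prod_eq_prod_map_map hY.aemeasurable hXbar.aemeasurable).mp
      hindep.symm
  -- Law(Y, T(X̄,Y)) = Law(Y) ⊗ₘ κ
  have hmain : μ.map (fun ω => (Y ω, T (Xbar ω, Y ω))) = (μ.map Y) ⊗ₘ κ := by
    have h1 : μ.map (fun ω => (Y ω, T (Xbar ω, Y ω)))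
        = (μ.map (fun ω => (Y ω, Xbar ω))).map (fun p => (p.1, T (p.2, p.1))) := by
      rw [Measure.map_map (by fun_prop) (by fun_prop)]
      rfl
    rw [h1, hprod]
    ext s hs
    rw [Measure.map_apply (by fun_prop) hs, Measure.prod_apply ((by fun_prop : Measurable
      (fun p : (Fin m → ℝ) × (Fin n → ℝ) => (p.1, T (p.2, p.1)))) hs),
      Measure.compProd_apply hs]
    refine lintegral_congr fun y => ?_
    rw [hκ_apply, Measure.map_apply (by fun_prop) (measurable_prodMk_left hs)]
    rfl
  have hfinal : μ.map (fun ω => (Y ω, T (Xbar ω, Y ω))) = μ.map (fun ω => (Y ω, X ω)) := by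
    rw [hmain, hcomp, ← hdis]
  have := congrArg (fun ν : Measure ((Fin m → ℝ) × (Fin n → ℝ)) => ν.map Prod.swap) hfinal
  simpa [Measure.map_map measurable_swap (by fun_prop : Measurable fun ω =>
    (Y ω, T (Xbar ω, Y ω))), Measure.map_map measurable_swap (hY.prodMk hX),
    Function.comp_def] using this
end
end
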